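/- If a group Γ contains an infinite acentral subgroup A of infinite index, then Γ is not presentable by products: there do not exist element-wise commuting infinite subgroups Γ₁, Γ₂ of Γ whose product Γ₁Γ₂ has finite index in Γ. -/
import Mathlib


/-- A subgroup `A ⊆ Γ` is acentral if the centralizer of every nontrivial element of
`A` is contained in `A`. -/
def Acentral {G : Type*} [Group G] (A : Subgroup G) : Prop :=
  ∀ g ∈ A, g ≠ 1 → Subgroup.centralizer {g} ≤ A

/-- A group is presentable by products: there are two element-wise commuting infinite
subgroups whose product (= join) has finite index. -/
def PresentableByProducts (G : Type*) [Group G] : Prop :=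
  ∃ H K : Subgroup G, (∀ a ∈ H, ∀ b ∈ K, a * b = b * a) ∧
    Infinite ↥H ∧ Infinite ↥K ∧ (H ⊔ K).FiniteIndex

/-- The product of two element-wise commuting subgroups is a subgroup containing the join. -/
lemma mem_sup_of_commute {G : Type*} [Group G] {H K : Subgroup G}
    (hcomm : ∀ a ∈ H, ∀ b ∈ K, a * b = b * a) {x : G} (hx : x ∈ H ⊔ K) :
    ∃ h ∈ H, ∃ k ∈ K, x = h * k := by
  let M : Subgroup G :=
    { carrier := {x | ∃ h ∈ H, ∃ k ∈ K, x = h * k}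
      one_mem' := ⟨1, one_mem H, 1, one_mem K, by simp⟩
      mul_mem' := by
        rintro a b ⟨h₁, hh₁, k₁, hk₁, rfl⟩ ⟨h₂, hh₂, k₂, hk₂, rfl⟩
        refine ⟨h₁ * h₂, mul_mem hh₁ hh₂, k₁ * k₂, mul_mem hk₁ hk₂, ?_⟩
        have hc := hcomm h₂ hh₂ k₁ hk₁
        calc h₁ * k₁ * (h₂ * k₂) = h₁ * (k₁ * h₂) * k₂ := by group
          _ = h₁ * (h₂ * k₁) * k₂ := by rw [hc]
          _ = h₁ * h₂ * (k₁ * k₂) := by group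
      inv_mem' := by
        rintro a ⟨h, hh, k, hk, rfl⟩
        refine ⟨h⁻¹, inv_mem hh, k⁻¹, inv_mem hk, ?_⟩
        rw [mul_inv_rev, hcomm h⁻¹ (inv_mem hh) k⁻¹ (inv_mem hk)] }
  have hle : H ⊔ K ≤ M := by
    apply sup_le
    · intro h hh; exact ⟨h, hh, 1, one_mem K, by simp⟩
    · intro k hk; exact ⟨1, one_mem H, k, hk, by simp⟩
  exact hle hx

/-- An infinite subgroup contains a nontrivial element. -/
lemma exists_ne_one_of_infinite {G : Type*} [Group G] (H : Subgroup G)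
    [hH : Infinite ↥H] : ∃ h ∈ H, h ≠ 1 := by
  by_contra hcon
  push_neg at hcon
  have : H = ⊥ := by
    apply le_antisymm _ bot_le
    intro x hx
    simp [hcon x hx]
  subst this
  exact not_finite ↥(⊥ : Subgroup G)

/-- a group containing an infinite acentral subgroup of infinite index
is not presentable by products. -/
theorem stmt18 {G : Type*} [Group G] (A : Subgroup G)
    (hA : Acentral A) (hinf : Infinite ↥A) (hidx : A.index = 0) :
    ¬ PresentableByProducts G := by
  rintro ⟨H, K, hcomm, hHinf, hKinf, hfin⟩
  -- A does not have finite index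
  have hAnf : ¬ A.FiniteIndex := fun h => h.index_ne_zero hidx
  -- key step: a nontrivial element of A in H (or in K) gives a contradiction
  have keyH : ∀ g ∈ H, g ∈ A → g ≠ 1 → False := by
    intro g hgH hgA hg1
    have hKA : K ≤ A := by
      intro k hk
      exact hA g hgA hg1 (Subgroup.mem_centralizer_singleton_iff.mpr
        ((hcomm g hgH k hk).symm))
    obtain ⟨k, hk, hk1⟩ := exists_ne_one_of_infinite K (hH := hKinf)
    have hHA : H ≤ A := by
      intro h hh
      exact hA k (hKA hk) hk1 (Subgroup.mem_centralizer_singleton_iff.mpr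
        (hcomm h hh k hk))
    have : (H ⊔ K) ≤ A := sup_le hHA hKA
    exact hAnf (Subgroup.finiteIndex_of_le this)
  have keyK : ∀ g ∈ K, g ∈ A → g ≠ 1 → False := by
    intro g hgK hgA hg1
    have hHA : H ≤ A := by
      intro h hh
      exact hA g hgA hg1 (Subgroup.mem_centralizer_singleton_iff.mpr
        (hcomm h hh g hgK))
    obtain ⟨h, hh, hh1⟩ := exists_ne_one_of_infinite H (hH := hHinf)
    have hKA : K ≤ A := by
      intro k hk
      exact hA h (hHA hh) hh1 (Subgroup.mem_centralizer_singleton_iff.mpr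
        ((hcomm h hh k hk).symm))
    have : (H ⊔ K) ≤ A := sup_le hHA hKA
    exact hAnf (Subgroup.finiteIndex_of_le this)
  -- find a nontrivial element of A ∩ (H ⊔ K)
  have : ∃ a ∈ A, a ∈ H ⊔ K ∧ a ≠ 1 := by
    by_contra hcon
    push_neg at hcon
    have hfinq : Finite (G ⧸ (H ⊔ K)) := @Subgroup.finite_quotient_of_finiteIndex _ _ _ hfin
    have hinj : Function.Injective (fun a : ↥A => (QuotientGroup.mk (a : G) : G ⧸ (H ⊔ K))) := by
      intro a b hab
      have : (a : G)⁻¹ * b ∈ H ⊔ K := (QuotientGroup.eq).mp hab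
      have hmem : (a : G)⁻¹ * b ∈ A := mul_mem (inv_mem a.2) b.2
      by_cases h1 : (a : G)⁻¹ * b = 1
      · ext; exact inv_mul_eq_one.mp h1
      · exact absurd h1 (fun h => h (hcon _ hmem this))
    have : Finite ↥A := Finite.of_injective _ hinj
    exact not_finite ↥A
  obtain ⟨a, haA, haHK, ha1⟩ := this
  obtain ⟨h, hh, k, hk, rfl⟩ := mem_sup_of_commute hcomm haHK
  by_cases hh1 : h = 1
  · subst hh1
    rw [one_mul] at haA ha1
    exact keyK k hk haA ha1
  · -- h commutes with h*k so h ∈ centralizer of h*k ≤ A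
    have hcen : h ∈ Subgroup.centralizer {h * k} := by
      rw [Subgroup.mem_centralizer_singleton_iff, mul_assoc, hcomm h hh k hk]
    have hhA : h ∈ A := hA _ haA ha1 hcen
    exact keyH h hh hhA hh1
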